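/- Monotone decay of the discrete energy along trajectories of the first-order IEQ-DG scheme (Theorem 3.1, trajectory form): let Δt > 0, let P : H → V be the orthogonal projection onto V, and for each n ∈ ℕ let Tₙ : H → H be a self-adjoint bounded linear operator. Let (uₙ) and (qₙ) be sequences in V and (Uₙ) a sequence in H such that for every n ∈ ℕ: U_{n+1} = P Uₙ + (1/2) Tₙ (u_{n+1} − uₙ), and for all φ, ψ ∈ V: ⟨(u_{n+1} − uₙ)/Δt, φ⟩ + b(u_{n+1}, φ) = −A(φ, q_{n+1}) − ⟨Tₙ U_{n+1}, φ⟩ and ⟨qₙ, ψ⟩ = A(uₙ, ψ). Then for every n ∈ ℕ: E(u_{n+1}, q_{n+1}, P U_{n+1}) ≤ E(uₙ, qₙ, P Uₙ) − (1/Δt)‖u_{n+1} − uₙ‖² − (1/2)‖q_{n+1} − qₙ‖² − ‖U_{n+1} − P Uₙ‖² − (1/2) b(u_{n+1} − uₙ, u_{n+1} − uₙ); in particular the sequence of discrete energies Eⁿ := E(uₙ, qₙ, P Uₙ) is nonincreasing in n, independent of the size of Δt. -/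

import Mathlib

/-- Monotone decay of the discrete energy along trajectories of the first-order
IEQ-DG scheme (Theorem 3.1, trajectory form). -/
theorem stmt_12
    {H : Type*} [NormedAddCommGroup H] [InnerProductSpace ℝ H] [CompleteSpace H]
    (V : Submodule ℝ H) [FiniteDimensional ℝ V]
    (A : V →ₗ[ℝ] V →ₗ[ℝ] ℝ)
    (b : V →ₗ[ℝ] V →ₗ[ℝ] ℝ)
    (hb_symm : ∀ x y : V, b x y = b y x)
    (hb_pos : ∀ x : V, 0 ≤ b x x)
    (E : V → V → H → ℝ)
    (hE : ∀ (u q : V) (U : H), E u q U = (1/2) * ‖(q : H)‖^2 + ‖U‖^2 + (1/2) * b u u)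
    (Δt : ℝ) (hΔt : 0 < Δt)
    (T : ℕ → H →L[ℝ] H)
    (hT : ∀ n : ℕ, ∀ x y : H, (inner ℝ (T n x) y : ℝ) = (inner ℝ x (T n y) : ℝ))
    (u q : ℕ → V) (U : ℕ → H)
    (hU : ∀ n : ℕ,
      U (n+1) = ((Submodule.orthogonalProjectionOnto V (U n) : V) : H)
        + (1/2 : ℝ) • T n ((u (n+1) : H) - (u n : H)))
    (heq1 : ∀ n : ℕ, ∀ φ : V,
      (inner ℝ ((1/Δt) • ((u (n+1) : H) - (u n : H))) (φ : H) : ℝ) + b (u (n+1)) φ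
        = -A φ (q (n+1)) - (inner ℝ (T n (U (n+1))) (φ : H) : ℝ))
    (heq2 : ∀ n : ℕ, ∀ ψ : V, (inner ℝ (q n : H) (ψ : H) : ℝ) = A (u n) ψ) :
    (∀ n : ℕ,
      E (u (n+1)) (q (n+1)) ((Submodule.orthogonalProjectionOnto V (U (n+1)) : V) : H)
        ≤ E (u n) (q n) ((Submodule.orthogonalProjectionOnto V (U n) : V) : H)
          - (1/Δt) * ‖(u (n+1) : H) - (u n : H)‖^2
          - (1/2) * ‖(q (n+1) : H) - (q n : H)‖^2
          - ‖U (n+1) - ((Submodule.orthogonalProjectionOnto V (U n) : V) : H)‖^2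
          - (1/2) * b (u (n+1) - u n) (u (n+1) - u n))
    ∧ Antitone (fun n : ℕ =>
        E (u n) (q n) ((Submodule.orthogonalProjectionOnto V (U n) : V) : H)) := by
  have hproj : ∀ x : H, ‖((Submodule.orthogonalProjectionOnto V x : V) : H)‖ ≤ ‖x‖ := by
    intro x
    have h1 := (Submodule.orthogonalProjectionOnto V).le_opNorm x
    have h2 := Submodule.orthogonalProjectionOnto_norm_le V
    have h3 : ‖((Submodule.orthogonalProjectionOnto V x : V) : H)‖ = ‖(Submodule.orthogonalProjectionOnto V x : V)‖ := rfl
    nlinarith [norm_nonneg x]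
  have key : ∀ n : ℕ,
      E (u (n+1)) (q (n+1)) ((Submodule.orthogonalProjectionOnto V (U (n+1)) : V) : H)
        ≤ E (u n) (q n) ((Submodule.orthogonalProjectionOnto V (U n) : V) : H)
          - (1/Δt) * ‖(u (n+1) : H) - (u n : H)‖^2
          - (1/2) * ‖(q (n+1) : H) - (q n : H)‖^2
          - ‖U (n+1) - ((Submodule.orthogonalProjectionOnto V (U n) : V) : H)‖^2
          - (1/2) * b (u (n+1) - u n) (u (n+1) - u n) := by
    intro n
    set d : H := (u (n+1) : H) - (u n : H) with hd
    set Pn : H := ((Submodule.orthogonalProjectionOnto V (U n) : V) : H) with hPn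
    have hdV : ((u (n+1) - u n : V) : H) = d := by
      simp [hd]
    -- variational equation with test function u(n+1) - u n
    have h1 := heq1 n (u (n+1) - u n)
    rw [hdV] at h1
    -- smul inner
    have hinner : (inner ℝ ((1/Δt) • d) d : ℝ) = (1/Δt) * ‖d‖^2 := by
      rw [real_inner_smul_left, real_inner_self_eq_norm_sq]
    -- A term
    have hA : (A (u (n+1) - u n) (q (n+1)) : ℝ)
        = (inner ℝ (q (n+1) : H) (q (n+1) : H) : ℝ) - (inner ℝ (q n : H) (q (n+1) : H) : ℝ) := by
      rw [map_sub, LinearMap.sub_apply, ← heq2 (n+1) (q (n+1)), ← heq2 n (q (n+1))]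
    -- T term
    have hdiff : U (n+1) - Pn = (1/2 : ℝ) • T n d := by
      rw [hU n]; abel
    have hTd : T n d = (2:ℝ) • (U (n+1) - Pn) := by
      rw [hdiff, smul_smul]; norm_num
    have hTinner : (inner ℝ (T n (U (n+1))) d : ℝ) = 2 * (inner ℝ (U (n+1)) (U (n+1) - Pn) : ℝ) := by
      rw [hT n, hTd, real_inner_smul_right]
    -- inner expansions
    have hq1 : ‖(q (n+1) : H) - (q n : H)‖^2
        = ‖(q (n+1) : H)‖^2 - 2 * (inner ℝ (q (n+1) : H) (q n : H) : ℝ) + ‖(q n : H)‖^2 :=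
      norm_sub_sq_real _ _
    have hq2 : (inner ℝ (q (n+1) : H) (q (n+1) : H) : ℝ) = ‖(q (n+1) : H)‖^2 :=
      real_inner_self_eq_norm_sq _
    have hq3 : (inner ℝ (q n : H) (q (n+1) : H) : ℝ) = (inner ℝ (q (n+1) : H) (q n : H) : ℝ) :=
      real_inner_comm _ _
    have hU1 : ‖U (n+1) - Pn‖^2 = ‖U (n+1)‖^2 - 2 * (inner ℝ (U (n+1)) Pn : ℝ) + ‖Pn‖^2 :=
      norm_sub_sq_real _ _
    have hU2 : (inner ℝ (U (n+1)) (U (n+1) - Pn) : ℝ)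
        = ‖U (n+1)‖^2 - (inner ℝ (U (n+1)) Pn : ℝ) := by
      rw [inner_sub_right, real_inner_self_eq_norm_sq]
    -- b expansions
    have hb1 : (b (u (n+1)) (u (n+1) - u n) : ℝ)
        = b (u (n+1)) (u (n+1)) - b (u (n+1)) (u n) := by
      rw [map_sub]
    have hb2 : (b (u (n+1) - u n) (u (n+1) - u n) : ℝ)
        = b (u (n+1)) (u (n+1)) - b (u (n+1)) (u n)
          - b (u n) (u (n+1)) + b (u n) (u n) := by
      simp only [map_sub, LinearMap.sub_apply]; ring
    have hbs := hb_symm (u (n+1)) (u n)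
    -- projection inequality
    have hP1 : ‖((Submodule.orthogonalProjectionOnto V (U (n+1)) : V) : H)‖^2 ≤ ‖U (n+1)‖^2 := by
      have := hproj (U (n+1))
      nlinarith [norm_nonneg ((Submodule.orthogonalProjectionOnto V (U (n+1)) : V) : H)]
    rw [hE, hE]
    rw [hinner, hA, hTinner] at h1
    linarith [h1, hq1, hq2, hq3, hU1, hU2, hb1, hb2, hbs, hP1]
  refine ⟨key, antitone_nat_of_succ_le fun n => ?_⟩
  have h := key n
  have h1 : 0 ≤ (1/Δt) * ‖(u (n+1) : H) - (u n : H)‖^2 := by positivity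
  have h2 : 0 ≤ (1/2 : ℝ) * ‖(q (n+1) : H) - (q n : H)‖^2 := by positivity
  have h3 : 0 ≤ ‖U (n+1) - ((Submodule.orthogonalProjectionOnto V (U n) : V) : H)‖^2 := by positivity
  have h4 := hb_pos (u (n+1) - u n)
  linarith
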